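/- Let A be a torsion-free abelian group of finite rank, i.e. the ℚ-vector space A ⊗_ℤ ℚ is finite dimensional. Then there exists an integer m such that every subgroup of the automorphism group Aut(A) all of whose elements have finite order has cardinality at most m. -/

import Mathlib

open Polynomial Matrix Module
open scoped TensorProduct

open Polynomial Matrix

lemma root_pow_eq_one {n : ℕ} (M : Matrix (Fin n) (Fin n) ℂ) {k : ℕ}
    (hM : M ^ k = 1) {μ : ℂ} (hμ : M.charpoly.IsRoot μ) : μ ^ k = 1 := by
  have hdet : (Matrix.diagonal (fun _ : Fin n => μ) - M).det = 0 := by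
    have h1 : (M.charpoly).eval μ = ((evalRingHom μ).mapMatrix (charmatrix M)).det := by
      rw [Matrix.charpoly, ← RingHom.map_det]; rfl
    have h2 : (evalRingHom μ).mapMatrix (charmatrix M)
        = Matrix.diagonal (fun _ : Fin n => μ) - M := by
      ext i j
      by_cases h : i = j
      · subst h; simp [charmatrix_apply_eq]
      · simp [charmatrix_apply_ne _ _ _ h, Matrix.diagonal_apply_ne _ h]
    rw [h2] at h1
    rw [← h1]; exact hμ
  obtain ⟨v, hv0, hv⟩ := (Matrix.exists_mulVec_eq_zero_iff).mpr hdet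
  have hMv : M.mulVec v = μ • v := by
    rw [Matrix.sub_mulVec] at hv
    have hs : (Matrix.diagonal (fun _ : Fin n => μ)).mulVec v = μ • v := by
      ext i; simp [Matrix.mulVec_diagonal]
    rw [hs] at hv
    exact (sub_eq_zero.mp hv).symm
  have hpow : ∀ j : ℕ, (M ^ j).mulVec v = μ ^ j • v := by
    intro j
    induction j with
    | zero => simp [Matrix.one_mulVec]
    | succ m ih =>
      rw [pow_succ', ← Matrix.mulVec_mulVec, ih, Matrix.mulVec_smul, hMv, smul_smul, ← pow_succ]
  have h := hpow k
  rw [hM, Matrix.one_mulVec] at h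
  have h3 : (μ ^ k - 1) • v = 0 := by rw [sub_smul, one_smul, ← h, sub_self]
  rcases smul_eq_zero.mp h3 with h4 | h4
  · exact sub_eq_zero.mp h4
  · exact absurd h4 hv0

open Polynomial Matrix


section
variable {n k : ℕ}

lemma key_facts (hk : 0 < k) (M : Matrix (Fin n) (Fin n) ℚ) (hM : M ^ k = 1) :
    (∃ z : ℤ, ((z : ℚ) = M.trace ∧ |z| ≤ n)) ∧ (M.trace = n → M = 1) := by
  rcases Nat.eq_zero_or_pos n with hn | hn
  · subst hn
    constructor
    · exact ⟨0, by simp [Matrix.trace], by simp⟩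
    · intro _; exact Subsingleton.elim _ _
  set f := algebraMap ℚ ℂ with hf
  set N : Matrix (Fin n) (Fin n) ℂ := f.mapMatrix M with hN
  have hNk : N ^ k = 1 := by rw [hN, ← map_pow, hM, _root_.map_one]
  have htr : N.trace = f M.trace := by
    simp [Matrix.trace, N, Matrix.diag, map_sum]
  have hroots : N.trace = N.charpoly.roots.sum := Matrix.trace_eq_sum_roots_charpoly N
  have hcard : Multiset.card N.charpoly.roots = n := by
    rw [(Polynomial.splits_iff_card_roots (f := N.charpoly)).mp (IsAlgClosed.splits _)]
    rw [Matrix.charpoly_natDegree_eq_dim, Fintype.card_fin]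
  have hrootmem : ∀ μ ∈ N.charpoly.roots, μ ^ k = 1 := fun μ hμ =>
    root_pow_eq_one N hNk (Polynomial.isRoot_of_mem_roots hμ)
  have habs : ∀ μ ∈ N.charpoly.roots, ‖μ‖ = 1 := by
    intro μ hμ
    have h := congrArg (‖·‖) (hrootmem μ hμ)
    rw [norm_pow, norm_one] at h
    by_contra hne
    rcases lt_or_gt_of_ne hne with hlt | hgt
    · have := pow_lt_one₀ (norm_nonneg μ) hlt hk.ne'
      rw [h] at this; exact lt_irrefl _ this
    · have := one_lt_pow₀ hgt hk.ne'
      rw [h] at this; exact lt_irrefl _ this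
  constructor
  · have hint : IsIntegral ℤ (M.trace) := by
      have h1 : IsIntegral ℤ N.trace := by
        rw [hroots]
        refine IsIntegral.multiset_sum (fun μ hμ => ⟨X ^ k - C 1, monic_X_pow_sub_C _ hk.ne', ?_⟩)
        simp [hrootmem μ hμ]
      rw [htr] at h1
      exact (isIntegral_algebraMap_iff ((algebraMap ℚ ℂ).injective)).mp h1
    obtain ⟨z, hz⟩ := IsIntegrallyClosed.isIntegral_iff.mp hint
    refine ⟨z, hz, ?_⟩
    have habs2 : ‖N.trace‖ ≤ n := by
      rw [hroots]
      calc ‖N.charpoly.roots.sum‖ = ‖N.charpoly.roots.sum‖ := by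
            rfl
        _ ≤ (N.charpoly.roots.map norm).sum := norm_multiset_sum_le _
        _ = (N.charpoly.roots.map (fun _ => (1:ℝ))).sum := by
            refine congrArg _ (Multiset.map_congr rfl ?_)
            intro μ hμ; rw [habs μ hμ]
        _ = n := by
            rw [Multiset.map_const', Multiset.sum_replicate, hcard]; simp
    rw [htr, ← hz] at habs2
    have heq : f ((algebraMap ℤ ℚ) z) = (z : ℂ) := by
      simp [hf]
    rw [heq, Complex.norm_intCast] at habs2
    exact_mod_cast habs2
  · intro htrn
    have hre : ∀ μ ∈ N.charpoly.roots, μ = 1 := by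
      have hsum : (N.charpoly.roots.map (fun μ => 1 - μ.re)).sum = 0 := by
        have h1 : (N.charpoly.roots.map Complex.re).sum = n := by
          have := congrArg Complex.re hroots
          rw [htr, htrn] at this
          have h2 : (N.charpoly.roots.sum).re
              = (N.charpoly.roots.map Complex.re).sum := by
            exact (AddMonoidHom.map_multiset_sum Complex.reAddGroupHom _)
          rw [h2] at this
          rw [← this]
          simp [hf]
        rw [Multiset.sum_map_sub]
        rw [h1, Multiset.map_const', Multiset.sum_replicate, hcard]
        simp
      intro μ hμ
      have h0 : (1 : ℝ) - μ.re = 0 := by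
        refine Multiset.all_zero_of_le_zero_le_of_sum_eq_zero ?_ hsum _
          (Multiset.mem_map_of_mem _ hμ)
        intro x hx
        obtain ⟨ν, hν, rfl⟩ := Multiset.mem_map.mp hx
        have : ν.re ≤ 1 := by
          calc ν.re ≤ |ν.re| := le_abs_self _
            _ ≤ ‖ν‖ := Complex.abs_re_le_norm ν
            _ = 1 := habs ν hν
        linarith
      have hre1 : μ.re = 1 := by linarith
      have him : μ.im = 0 := by
        have h2 : Complex.normSq μ = 1 := by
          have := habs μ hμ
          rw [← Complex.sq_norm, this]; norm_num
        have h3 := Complex.normSq_apply μ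
        rw [h2] at h3
        nlinarith
      exact Complex.ext (by simp [hre1]) (by simp [him])
    -- charpoly N = (X - 1)^n
    have hcp : N.charpoly = (X - C 1) ^ n := by
      rw [(IsAlgClosed.splits N.charpoly).eq_prod_roots_of_monic (charpoly_monic N)]
      rw [Multiset.map_congr (f := fun a => X - C a) (g := fun _ => X - C 1) rfl
        (fun μ hμ => by rw [hre μ hμ])]
      rw [Multiset.map_const', Multiset.prod_replicate, hcard]
    have hNint : IsIntegral ℂ N := .of_finite ℂ N
    have hmp1 : minpoly ℂ N ∣ (X - C 1) ^ n := hcp ▸ Matrix.minpoly_dvd_charpoly N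
    have hmp2 : minpoly ℂ N ∣ X ^ k - C 1 := by
      refine minpoly.dvd ℂ N ?_
      simp [hNk]
    have hsqf : Squarefree (X ^ k - C (1:ℂ)) := by
      refine (Polynomial.separable_X_pow_sub_C 1 ?_ one_ne_zero).squarefree
      exact_mod_cast (Nat.cast_ne_zero (R := ℂ)).mpr hk.ne'
    obtain ⟨j, hj, hassoc⟩ := (dvd_prime_pow (Polynomial.prime_X_sub_C (1:ℂ)) n).mp hmp1
    have hmono : minpoly ℂ N = (X - C 1) ^ j :=
      Polynomial.eq_of_monic_of_associated (minpoly.monic hNint)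
        ((Polynomial.monic_X_sub_C (1:ℂ)).pow j) hassoc
    haveI : Nonempty (Fin n) := ⟨⟨0, hn⟩⟩
    have hj1 : j = 1 := by
      rcases Nat.lt_or_ge j 2 with h2 | h2
      · interval_cases j
        · exfalso
          apply minpoly.ne_one ℂ N
          rw [hmono]; simp
        · rfl
      · exfalso
        have : (X - C (1:ℂ)) * (X - C 1) ∣ X ^ k - C 1 := by
          refine dvd_trans ?_ hmp2
          rw [hmono, ← pow_two]
          exact pow_dvd_pow _ h2
        exact Polynomial.not_isUnit_X_sub_C 1 (hsqf _ this)
    have hNeq : N = 1 := by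
      have := minpoly.aeval ℂ N
      rw [hmono, hj1, pow_one] at this
      simpa [sub_eq_zero] using this
    have : f.mapMatrix M = f.mapMatrix 1 := by rw [← hN, hNeq, _root_.map_one]
    exact Matrix.map_injective ((algebraMap ℚ ℂ).injective) this
end

open Polynomial Matrix Module


lemma matrix_bound {n : ℕ} (H : Subgroup (Matrix (Fin n) (Fin n) ℚ)ˣ)
    (hH : ∀ x ∈ H, IsOfFinOrder x) :
    Finite H ∧ Nat.card H ≤ (2 * n + 1) ^ (n ^ 2) := by
  classical
  set Mat := Matrix (Fin n) (Fin n) ℚ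
  have hfo : ∀ u : Matˣ, u ∈ H → ∃ k, 0 < k ∧ (u : Mat) ^ k = 1 := by
    intro u hu
    refine ⟨orderOf u, (hH u hu).orderOf_pos, ?_⟩
    rw [← Units.val_pow_eq_pow_val, pow_orderOf_eq_one u, Units.val_one]
  set S : Set Mat := Units.val '' (H : Set Matˣ) with hS
  set B : Submodule ℚ Mat := Submodule.span ℚ S with hB
  set s : Set B := ((↑) : B → Mat) ⁻¹' S with hs
  have hspan : ⊤ ≤ Submodule.span ℚ s := (Submodule.span_span_coe_preimage (s := S)).ge
  let ιs : Set B := (linearIndepOn_empty ℚ (id : B → B)).extend (Set.empty_subset s)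
  let b : Basis ιs ℚ B := Basis.ofSpan hspan
  haveI : Fintype ιs := FiniteDimensional.fintypeBasisIndex b
  have hbmem : ∀ i, ∃ h : Matˣ, h ∈ H ∧ (h : Mat) = (b i : Mat) := by
    intro i
    have h1 : b i ∈ s := Basis.ofSpan_subset hspan ⟨i, rfl⟩
    obtain ⟨h, hh, hval⟩ := h1
    exact ⟨h, hh, hval⟩
  choose hc hcH hcval using hbmem
  have key : ∀ u : H, ∀ i, ∃ z : ℤ,
      (z : ℚ) = Matrix.trace (((u : Matˣ) : Mat) * (b i : Mat)) ∧ |z| ≤ n := by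
    intro u i
    obtain ⟨k, hk, hpk⟩ := hfo _ (mul_mem u.2 (hcH i))
    have h2 := (key_facts hk _ hpk).1
    rw [Units.val_mul, hcval i] at h2
    exact h2
  choose F hF1 hF2 using key
  have hinj : Function.Injective F := by
    intro u u' huu
    have htreq : ∀ x : B, Matrix.trace (((u : Matˣ) : Mat) * (x : Mat))
        = Matrix.trace (((u' : Matˣ) : Mat) * (x : Mat)) := by
      let L : Mat →ₗ[ℚ] ℚ :=
        (Matrix.traceLinearMap (Fin n) ℚ ℚ).comp (LinearMap.mulLeft ℚ ((u : Matˣ) : Mat))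
      let L' : Mat →ₗ[ℚ] ℚ :=
        (Matrix.traceLinearMap (Fin n) ℚ ℚ).comp (LinearMap.mulLeft ℚ ((u' : Matˣ) : Mat))
      have heq : L.comp B.subtype = L'.comp B.subtype := by
        refine Basis.ext b (fun i => ?_)
        have h1 := hF1 u i
        have h2 := hF1 u' i
        have h3 : F u i = F u' i := by rw [huu]
        simp only [LinearMap.comp_apply, Submodule.subtype_apply]
        show L (b i : Mat) = L' (b i : Mat)
        simp only [L, L', LinearMap.comp_apply, LinearMap.mulLeft_apply,
          Matrix.traceLinearMap_apply]
        rw [← h1, ← h2, h3]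
      intro x
      have := congrArg (fun f => f x) heq
      simpa [L, L', LinearMap.comp_apply] using this
    -- apply to u'⁻¹
    have hmem : (((u' : Matˣ)⁻¹ : Matˣ) : Mat) ∈ B := by
      apply Submodule.subset_span
      exact ⟨(u' : Matˣ)⁻¹, inv_mem u'.2, rfl⟩
    have h4 := htreq ⟨_, hmem⟩
    simp only [Submodule.coe_mk] at h4
    have h5 : Matrix.trace (((u' : Matˣ) : Mat) * (((u' : Matˣ)⁻¹ : Matˣ) : Mat)) = (n : ℚ) := by
      rw [← Units.val_mul, mul_inv_cancel, Units.val_one, Matrix.trace_one]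
      simp
    rw [h5] at h4
    -- now u * u'⁻¹ has trace n
    obtain ⟨k, hk, hpk⟩ := hfo _ (mul_mem u.2 (inv_mem u'.2))
    have h6 := (key_facts hk _ hpk).2
    rw [Units.val_mul] at h6
    have h7 := h6 h4
    have h8 : (u : Matˣ) * (u' : Matˣ)⁻¹ = 1 := Units.ext (by rw [Units.val_mul, h7, Units.val_one])
    have : (u : Matˣ) = (u' : Matˣ) := by
      have := mul_inv_eq_one.mp h8
      exact this
    exact Subtype.ext this
  haveI hfinI : Finite H := by
    have : Function.Injective (fun u : H => fun i : ιs => (⟨F u i, by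
        simpa [Finset.mem_Icc] using abs_le.mp (hF2 u i)⟩ : (Finset.Icc (-(n:ℤ)) n))) := by
      intro u u' h
      apply hinj
      funext i
      exact congrArg Subtype.val (congrFun h i)
    exact Finite.of_injective _ this
  refine ⟨hfinI, ?_⟩
  have hcardle : Nat.card H ≤ Nat.card (ιs → (Finset.Icc (-(n:ℤ)) n)) := by
    refine Nat.card_le_card_of_injective (fun u : H => fun i : ιs => (⟨F u i, by
        simpa [Finset.mem_Icc] using abs_le.mp (hF2 u i)⟩ : (Finset.Icc (-(n:ℤ)) n))) ?_
    intro u u' h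
    apply hinj
    funext i
    exact congrArg Subtype.val (congrFun h i)
  refine le_trans hcardle ?_
  rw [Nat.card_fun]
  have hicc : Nat.card (Finset.Icc (-(n:ℤ)) n) = 2 * n + 1 := by
    rw [Nat.card_eq_fintype_card, Fintype.card_coe, Int.card_Icc]
    omega
  rw [hicc]
  have hd : Nat.card ιs ≤ n ^ 2 := by
    rw [Nat.card_eq_fintype_card, ← finrank_eq_card_basis b]
    calc finrank ℚ B ≤ finrank ℚ Mat := Submodule.finrank_le B
      _ = n ^ 2 := by rw [Module.finrank_matrix]; simp [pow_two, Module.finrank_self]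
  exact Nat.pow_le_pow_right (by omega) hd

open scoped TensorProduct
open Module

/-- The December 2024 Mathlib definition, removed since. -/
def AddMonoid.IsTorsionFree (G : Type*) [AddMonoid G] : Prop :=
  ∀ g : G, g ≠ 0 → ¬IsOfFinAddOrder g

theorem stmt_3 {A : Type*} [AddCommGroup A] (htf : AddMonoid.IsTorsionFree A)
    (hfin : FiniteDimensional ℚ (ℚ ⊗[ℤ] A)) :
    ∃ m : ℕ, ∀ H : AddSubgroup (AddAut A), (∀ x ∈ H, IsOfFinAddOrder x) →
      Finite H ∧ Nat.card H ≤ m := by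
  classical
  haveI := hfin
  haveI : NoZeroSMulDivisors ℤ A := ⟨fun {c x} h => by
    by_contra hne
    push_neg at hne
    exact htf x hne.2 ((isOfFinAddOrder_iff_zsmul_eq_zero).mpr ⟨c, hne.1, h⟩)⟩
  set V := ℚ ⊗[ℤ] A
  set n := finrank ℚ V with hn
  -- injectivity of a ↦ 1 ⊗ a
  let ι : A →ₗ[ℤ] V := TensorProduct.mk ℤ ℚ A 1
  have hbc : IsBaseChange ℚ ι := TensorProduct.isBaseChange ℤ A ℚ
  haveI : IsLocalizedModule (nonZeroDivisors ℤ) ι :=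
    (isLocalizedModule_iff_isBaseChange (nonZeroDivisors ℤ) ℚ ι).mpr hbc
  have hι : Function.Injective ι := by
    intro a a' h
    have h0 : ι (a - a') = 0 := by rw [map_sub, h, sub_self]
    obtain ⟨c, hc⟩ := (IsLocalizedModule.eq_zero_iff (nonZeroDivisors ℤ) ι).mp h0
    have hcne : (c : ℤ) ≠ 0 := nonZeroDivisors.coe_ne_zero c
    have hc' : (c : ℤ) • (a - a') = 0 := hc
    rcases smul_eq_zero.mp hc' with h1 | h1
    · exact absurd h1 hcne
    · exact sub_eq_zero.mp h1
  -- the representation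
  let ρ : Multiplicative (AddAut A) →* Module.End ℚ V :=
    { toFun := fun e => LinearMap.baseChange ℚ (Multiplicative.toAdd e).toAddMonoidHom.toIntLinearMap
      map_one' := by
        show LinearMap.baseChange ℚ (0 : AddAut A).toAddMonoidHom.toIntLinearMap = 1
        have h : (0 : AddAut A).toAddMonoidHom.toIntLinearMap = LinearMap.id :=
          LinearMap.ext fun a => rfl
        rw [h, LinearMap.baseChange_id]; rfl
      map_mul' := fun e e' => by
        show LinearMap.baseChange ℚ (Multiplicative.toAdd e + Multiplicative.toAdd e').toAddMonoidHom.toIntLinearMap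
          = LinearMap.baseChange ℚ (Multiplicative.toAdd e).toAddMonoidHom.toIntLinearMap
            * LinearMap.baseChange ℚ (Multiplicative.toAdd e').toAddMonoidHom.toIntLinearMap
        have h : (Multiplicative.toAdd e + Multiplicative.toAdd e').toAddMonoidHom.toIntLinearMap
            = (Multiplicative.toAdd e).toAddMonoidHom.toIntLinearMap ∘ₗ (Multiplicative.toAdd e').toAddMonoidHom.toIntLinearMap :=
          LinearMap.ext fun a => rfl
        rw [h, LinearMap.baseChange_comp]; rfl }
  have hρinj : Function.Injective ρ := by
    intro e e' h
    apply Multiplicative.toAdd.injective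
    ext a
    have h2 := congrArg (fun f : Module.End ℚ V => f (ι a)) h
    simp only [ρ, MonoidHom.coe_mk, OneHom.coe_mk] at h2
    have h3 : (1:ℚ) ⊗ₜ[ℤ] (Multiplicative.toAdd e a) = (1:ℚ) ⊗ₜ[ℤ] (Multiplicative.toAdd e' a) := by
      rw [show ι a = (1:ℚ) ⊗ₜ[ℤ] a from rfl, LinearMap.baseChange_tmul, LinearMap.baseChange_tmul] at h2
      exact h2
    exact hι h3
  let e1 := LinearMap.toMatrixAlgEquiv (Module.finBasis ℚ V)
  let ψ : Multiplicative (AddAut A) →* Matrix (Fin n) (Fin n) ℚ :=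
    e1.toRingEquiv.toRingHom.toMonoidHom.comp ρ
  let φ : Multiplicative (AddAut A) →* (Matrix (Fin n) (Fin n) ℚ)ˣ := ψ.toHomUnits
  have hφinj : Function.Injective φ := by
    intro e e' h
    apply hρinj
    apply e1.injective
    have := congrArg Units.val h
    exact this
  refine ⟨(2 * n + 1) ^ (n ^ 2), fun H hH => ?_⟩
  let H' : Subgroup (Multiplicative (AddAut A)) := AddSubgroup.toSubgroup H
  have hmap : ∀ x ∈ H'.map φ, IsOfFinOrder x := by
    rintro x ⟨y, hy, rfl⟩
    exact φ.isOfFinOrder ((isOfFinOrder_ofAdd_iff (x := Multiplicative.toAdd y)).mpr (hH (Multiplicative.toAdd y) hy))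
  obtain ⟨hfin', hcard'⟩ := matrix_bound (H'.map φ) hmap
  have hequiv0 : H ≃ H' :=
    { toFun := fun x => ⟨Multiplicative.ofAdd x.1, x.2⟩
      invFun := fun x => ⟨Multiplicative.toAdd x.1, x.2⟩
      left_inv := fun _ => rfl
      right_inv := fun _ => rfl }
  have hequiv : H ≃ H'.map φ := hequiv0.trans (Subgroup.equivMapOfInjective H' φ hφinj).toEquiv
  constructor
  · exact Finite.of_equiv _ hequiv.symm
  · rw [Nat.card_congr hequiv]
    exact hcard'
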